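/- Let X₁, …, Xₙ be i.i.d. real random variables with E[|X₁|^q] < ∞ for an even integer q ≥ 2 and mean m. Then E[ | (1/n)·Σ_{i=1}^n (X_i − m) |^q ] ≤ C_q · n^{−q/2} for a constant C_q depending only on q and E[|X₁ − m|^q] (Marcinkiewicz–Zygmund / moment bound), and in particular (1/n^q)·E[|Σ (X_i − m)|^q] = O(n^{−q/2}). -/

import Mathlib

open MeasureTheory ProbabilityTheory Finset

-- product of independent variables: integrability and factorization
lemma prod_integral_aux {Ω : Type*} [MeasurableSpace Ω] {P : Measure Ω} [IsProbabilityMeasure P]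
    (Y : ℕ → Ω → ℝ) (hYm : ∀ i, Measurable (Y i))
    (hYi : iIndepFun Y P)
    (c : ℕ → ℕ) (hint : ∀ i, Integrable (fun ω => Y i ω ^ c i) P)
    (s : Finset ℕ) :
    Integrable (fun ω => ∏ i ∈ s, Y i ω ^ c i) P ∧
      ∫ ω, ∏ i ∈ s, Y i ω ^ c i ∂P = ∏ i ∈ s, ∫ ω, Y i ω ^ c i ∂P := by
  classical
  have hgind : iIndepFun (fun i ω => Y i ω ^ c i) P :=
    hYi.comp (fun i x => x ^ c i) (fun i => measurable_id.pow_const (c i))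
  have hgm : ∀ i, Measurable (fun ω => Y i ω ^ c i) := fun i => (hYm i).pow_const (c i)
  induction s using Finset.induction_on with
  | empty => simp
  | @insert a s ha ih =>
    have hif : IndepFun (fun ω => ∏ i ∈ s, Y i ω ^ c i) (fun ω => Y a ω ^ c a) P := by
      have h2 := hgind.indepFun_finsetProd_of_notMem hgm ha
      have : (∏ j ∈ s, fun ω => Y j ω ^ c j) = (fun ω => ∏ i ∈ s, Y i ω ^ c i) := by
        ext ω; simp [Finset.prod_apply]
      rwa [this] at h2
    have hmul : Integrable ((fun ω => ∏ i ∈ s, Y i ω ^ c i) * fun ω => Y a ω ^ c a) P :=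
      hif.integrable_mul ih.1 (hint a)
    have heq : (fun ω => ∏ i ∈ insert a s, Y i ω ^ c i)
        = (fun ω => ∏ i ∈ s, Y i ω ^ c i) * fun ω => Y a ω ^ c a := by
      ext ω; simp [Finset.prod_insert ha, mul_comm]
    constructor
    · exact heq ▸ hmul
    · have hI := hif.integral_mul_eq_mul_integral (ih.1.aestronglyMeasurable) (hint a).aestronglyMeasurable
      calc ∫ ω, ∏ i ∈ insert a s, Y i ω ^ c i ∂P
          = ∫ ω, (∏ i ∈ s, Y i ω ^ c i) * Y a ω ^ c a ∂P :=
            integral_congr_ae (Filter.Eventually.of_forall fun ω => by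
              simp only [Finset.prod_insert ha, mul_comm])
        _ = (∫ ω, ∏ i ∈ s, Y i ω ^ c i ∂P) * ∫ ω, Y a ω ^ c a ∂P := hI
        _ = ∏ i ∈ insert a s, ∫ ω, Y i ω ^ c i ∂P := by
            rw [Finset.prod_insert ha, ih.2, mul_comm]

lemma integrable_pow_of_memLq {Ω : Type*} [MeasurableSpace Ω] {P : Measure Ω}
    [IsProbabilityMeasure P] {Y : Ω → ℝ} {q c : ℕ} (hY : MemLp Y q P) (hc : c ≤ q) :
    Integrable (fun ω => Y ω ^ c) P := by
  rcases Nat.eq_zero_or_pos c with rfl | hcpos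
  · simpa using integrable_const (1 : ℝ)
  have h1 : MemLp Y c P := hY.mono_exponent (by exact_mod_cast hc)
  have h2 := h1.integrable_norm_rpow (by exact_mod_cast hcpos.ne') (by simp)
  refine h2.mono' ((h1.aestronglyMeasurable.aemeasurable.pow_const c).aestronglyMeasurable) ?_
  filter_upwards with ω
  simp only [Real.norm_eq_abs, abs_pow, ENNReal.toReal_natCast]
  rw [← Real.rpow_natCast]

lemma abs_integral_pow_le {Ω : Type*} [MeasurableSpace Ω] {P : Measure Ω}
    [IsProbabilityMeasure P] {Y : Ω → ℝ} {q c : ℕ} (hY : MemLp Y q P) (hc : c ≤ q) :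
    |∫ ω, Y ω ^ c ∂P| ≤ 1 + ∫ ω, |Y ω| ^ q ∂P := by
  have hiq : Integrable (fun ω => |Y ω| ^ q) P := by
    have := (integrable_pow_of_memLq hY le_rfl).abs
    refine this.congr (Filter.Eventually.of_forall fun ω => ?_)
    simp [abs_pow]
  have hic : Integrable (fun ω => |Y ω| ^ c) P := by
    have := (integrable_pow_of_memLq hY hc).abs
    refine this.congr (Filter.Eventually.of_forall fun ω => ?_)
    simp [abs_pow]
  have habs : |∫ ω, Y ω ^ c ∂P| ≤ ∫ ω, |Y ω ^ c| ∂P := by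
    simpa [Real.norm_eq_abs] using norm_integral_le_integral_norm (μ := P) (fun ω => Y ω ^ c)
  calc |∫ ω, Y ω ^ c ∂P| ≤ ∫ ω, |Y ω ^ c| ∂P := habs
    _ = ∫ ω, |Y ω| ^ c ∂P := by simp [abs_pow]
    _ ≤ ∫ ω, 1 + |Y ω| ^ q ∂P := by
        refine integral_mono hic (by exact (integrable_const 1).add hiq) fun ω => ?_
        rcases le_total (|Y ω|) 1 with h | h
        · have h1 := pow_le_one₀ (abs_nonneg (Y ω)) h (n := c)
          have h2 := pow_nonneg (abs_nonneg (Y ω)) q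
          linarith
        · have h1 := pow_le_pow_right₀ h hc
          linarith [one_le_pow₀ (M₀ := ℝ) h (n := c)]
    _ = 1 + ∫ ω, |Y ω| ^ q ∂P := by
        rw [integral_add (integrable_const 1) hiq]; simp

open scoped Classical in
lemma counting_aux (q n : ℕ) (hn : 1 ≤ n) :
    (((Fintype.piFinset (fun _ : Fin q => Finset.range n))).filter
      (fun f => ∀ i, (Finset.univ.filter (fun j => f j = i)).card ≠ 1)).card
      ≤ n ^ (q / 2) * (q / 2) ^ q := by
  classical
  set h : ℕ := q / 2 with hh
  set h' : ℕ := min h n with hh'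
  have hsub : (((Fintype.piFinset (fun _ : Fin q => Finset.range n))).filter
      (fun f => ∀ i, (Finset.univ.filter (fun j => f j = i)).card ≠ 1))
      ⊆ (Finset.powersetCard h' (Finset.range n)).biUnion
        (fun T => Fintype.piFinset (fun _ : Fin q => T)) := by
    intro f hf
    simp only [Finset.mem_filter, Fintype.mem_piFinset] at hf
    obtain ⟨hf1, hf2⟩ := hf
    have himsub : Finset.image f Finset.univ ⊆ Finset.range n := by
      intro i hi
      simp only [Finset.mem_image] at hi
      obtain ⟨j, -, rfl⟩ := hi
      exact hf1 j
    have hcard2 : ∀ i ∈ Finset.image f Finset.univ,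
        2 ≤ (Finset.univ.filter (fun j => f j = i)).card := by
      intro i hi
      simp only [Finset.mem_image] at hi
      obtain ⟨j, -, rfl⟩ := hi
      have hpos : 0 < (Finset.univ.filter (fun j' => f j' = f j)).card :=
        Finset.card_pos.2 ⟨j, by simp⟩
      have := hf2 (f j)
      omega
    have hsum : ∑ i ∈ Finset.image f Finset.univ,
        (Finset.univ.filter (fun j => f j = i)).card = q := by
      rw [← Finset.card_eq_sum_card_fiberwise
        (fun j _ => Finset.mem_image_of_mem f (Finset.mem_univ j))]
      simp
    have himcard : (Finset.image f Finset.univ).card ≤ h := by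
      have h2c : 2 * (Finset.image f Finset.univ).card ≤ q := by
        calc 2 * (Finset.image f Finset.univ).card
            = ∑ _i ∈ Finset.image f Finset.univ, 2 := by
              rw [Finset.sum_const, smul_eq_mul, mul_comm]
          _ ≤ ∑ i ∈ Finset.image f Finset.univ,
              (Finset.univ.filter (fun j => f j = i)).card := Finset.sum_le_sum hcard2
          _ = q := hsum
      exact (Nat.le_div_iff_mul_le two_pos).2 (by omega)
    have himcard' : (Finset.image f Finset.univ).card ≤ h' := by
      refine le_min himcard ?_
      simpa using Finset.card_le_card himsub
    obtain ⟨T, hT1, hT2, hT3⟩ := Finset.exists_subsuperset_card_eq himsub himcard'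
      (by rw [Finset.card_range]; exact min_le_right h n)
    refine Finset.mem_biUnion.2 ⟨T, Finset.mem_powersetCard.2 ⟨hT2, hT3⟩, ?_⟩
    exact Fintype.mem_piFinset.2 fun j => hT1 (Finset.mem_image_of_mem f (Finset.mem_univ j))
  calc (((Fintype.piFinset (fun _ : Fin q => Finset.range n))).filter
      (fun f => ∀ i, (Finset.univ.filter (fun j => f j = i)).card ≠ 1)).card
      ≤ ((Finset.powersetCard h' (Finset.range n)).biUnion
        (fun T => Fintype.piFinset (fun _ : Fin q => T))).card := Finset.card_le_card hsub
    _ ≤ ∑ T ∈ Finset.powersetCard h' (Finset.range n),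
        (Fintype.piFinset (fun _ : Fin q => T)).card := Finset.card_biUnion_le
    _ ≤ ∑ _T ∈ Finset.powersetCard h' (Finset.range n), h' ^ q := by
        refine Finset.sum_le_sum fun T hT => ?_
        rw [Fintype.card_piFinset]
        obtain ⟨-, hTc⟩ := Finset.mem_powersetCard.1 hT
        simp [hTc]
    _ = (n.choose h') * h' ^ q := by
        rw [Finset.sum_const, smul_eq_mul, Finset.card_powersetCard, Finset.card_range]
    _ ≤ n ^ h * h ^ q := by
        refine Nat.mul_le_mul ?_ (Nat.pow_le_pow_left (min_le_left h n) q)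
        exact le_trans (Nat.choose_le_pow n h') (Nat.pow_le_pow_right hn (min_le_left h n))

theorem stmt_12 {Ω : Type*} [MeasurableSpace Ω] (P : Measure Ω)
    [IsProbabilityMeasure P]
    (X : ℕ → Ω → ℝ) (hmeas : ∀ i, Measurable (X i))
    (hindep : iIndepFun X P)
    (hid : ∀ i, IdentDistrib (X i) (X 0) P P)
    (q : ℕ) (hq : 2 ≤ q) (hq_even : Even q)
    (hLq : MemLp (X 0) q P)
    (m : ℝ) (hm : ∫ ω, X 0 ω ∂P = m) :
    ∃ C : ℝ, 0 ≤ C ∧ ∀ n : ℕ, 1 ≤ n →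
      ∫ ω, |(1/(n:ℝ)) * ∑ i ∈ Finset.range n, (X i ω - m)| ^ q ∂P
        ≤ C * (n:ℝ) ^ (-(q:ℝ)/2) := by
  classical
  set Y : ℕ → Ω → ℝ := fun i ω => X i ω - m with hYdef
  have hYm : ∀ i, Measurable (Y i) := fun i => (hmeas i).sub measurable_const
  have hYindep : iIndepFun Y P :=
    hindep.comp (fun _ x => x - m) (fun _ => measurable_id.sub measurable_const)
  have hYid : ∀ i, IdentDistrib (Y i) (Y 0) P P :=
    fun i => (hid i).comp (measurable_id.sub measurable_const)
  have hY0Lq : MemLp (Y 0) q P := hLq.sub (memLp_const m)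
  have hYLq : ∀ i, MemLp (Y i) q P := fun i => (hYid i).symm.memLp_snd hY0Lq
  have hone_le : (1 : ENNReal) ≤ (q : ENNReal) := by exact_mod_cast (by omega : 1 ≤ q)
  have hmean : ∫ ω, Y 0 ω ∂P = 0 := by
    have hintX : Integrable (X 0) P := hLq.integrable hone_le
    simp [hYdef, integral_sub hintX (integrable_const m), hm]
  set M : ℝ := 1 + ∫ ω, |Y 0 ω| ^ q ∂P with hMdef
  have hM1 : 1 ≤ M := by
    have h0 : 0 ≤ ∫ ω, |Y 0 ω| ^ q ∂P := integral_nonneg fun ω => by positivity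
    simp only [hMdef]; linarith
  set I : ℕ → ℝ := fun c => ∫ ω, Y 0 ω ^ c ∂P with hIdef
  have hIbound : ∀ c, c ≤ q → |I c| ≤ M := fun c hc => abs_integral_pow_le hY0Lq hc
  have hI1 : I 1 = 0 := by simpa [hIdef] using hmean
  have hI0 : I 0 = 1 := by simp [hIdef]
  set hhalf : ℕ := q / 2 with hhdef
  have hq2 : 2 * hhalf = q := Nat.two_mul_div_two_of_even hq_even
  refine ⟨(hhalf : ℝ) ^ q * M ^ q, by positivity, ?_⟩
  intro n hn
  have hn0 : (0 : ℝ) < n := by exact_mod_cast hn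
  set F := Fintype.piFinset (fun _ : Fin q => Finset.range n) with hFdef
  set cf : (Fin q → ℕ) → ℕ → ℕ :=
    fun f i => (Finset.univ.filter (fun j => f j = i)).card with hcfdef
  have hcfle : ∀ f i, cf f i ≤ q := fun f i => by
    simpa using Finset.card_filter_le (Finset.univ : Finset (Fin q)) _
  -- pointwise expansion of the q-th power
  have hexp : ∀ ω, (∑ i ∈ Finset.range n, Y i ω) ^ q
      = ∑ f ∈ F, ∏ i ∈ Finset.range n, Y i ω ^ cf f i := by
    intro ω
    have e1 : (∑ i ∈ Finset.range n, Y i ω) ^ q = ∑ f ∈ F, ∏ j : Fin q, Y (f j) ω := by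
      rw [← Finset.prod_univ_sum (fun _ : Fin q => Finset.range n) (fun _ j => Y j ω)]
      simp
    rw [e1]
    refine Finset.sum_congr rfl fun f hf => ?_
    have hmap : ∀ j ∈ (Finset.univ : Finset (Fin q)), f j ∈ Finset.range n :=
      fun j _ => (Fintype.mem_piFinset.1 hf) j
    rw [← Finset.prod_fiberwise_of_maps_to hmap (fun j => Y (f j) ω)]
    refine Finset.prod_congr rfl fun i _ => ?_
    calc ∏ j ∈ Finset.univ.filter (fun j => f j = i), Y (f j) ω
        = ∏ _j ∈ Finset.univ.filter (fun j => f j = i), Y i ω :=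
          Finset.prod_congr rfl fun j hj => by rw [(Finset.mem_filter.1 hj).2]
      _ = Y i ω ^ cf f i := Finset.prod_const _
  have hint : ∀ f : Fin q → ℕ, ∀ i, Integrable (fun ω => Y i ω ^ cf f i) P :=
    fun f i => integrable_pow_of_memLq (hYLq i) (hcfle f i)
  have hterm := fun f : Fin q → ℕ =>
    prod_integral_aux Y hYm hYindep (cf f) (hint f) (Finset.range n)
  have hswap : ∫ ω, (∑ i ∈ Finset.range n, Y i ω) ^ q ∂P
      = ∑ f ∈ F, ∏ i ∈ Finset.range n, I (cf f i) := by
    calc ∫ ω, (∑ i ∈ Finset.range n, Y i ω) ^ q ∂P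
        = ∫ ω, ∑ f ∈ F, ∏ i ∈ Finset.range n, Y i ω ^ cf f i ∂P :=
          integral_congr_ae (Filter.Eventually.of_forall fun ω => hexp ω)
      _ = ∑ f ∈ F, ∫ ω, ∏ i ∈ Finset.range n, Y i ω ^ cf f i ∂P :=
          integral_finset_sum F fun f _ => (hterm f).1
      _ = ∑ f ∈ F, ∏ i ∈ Finset.range n, ∫ ω, Y i ω ^ cf f i ∂P :=
          Finset.sum_congr rfl fun f _ => (hterm f).2
      _ = ∑ f ∈ F, ∏ i ∈ Finset.range n, I (cf f i) := by
          refine Finset.sum_congr rfl fun f _ => Finset.prod_congr rfl fun i _ => ?_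
          exact ((hYid i).comp (measurable_id.pow_const (cf f i))).integral_eq
  set Sg := F.filter (fun f => ∀ i, cf f i ≠ 1) with hSgdef
  have hvanish : ∑ f ∈ F, ∏ i ∈ Finset.range n, I (cf f i)
      = ∑ f ∈ Sg, ∏ i ∈ Finset.range n, I (cf f i) := by
    refine (Finset.sum_filter_of_ne fun f hf hne => ?_).symm
    intro i hi1
    refine hne (Finset.prod_eq_zero (i := i) ?_ (by rw [hi1, hI1]))
    have hpos : 0 < cf f i := by omega
    have hex : ∃ j : Fin q, f j = i := by
      obtain ⟨j, hj⟩ := Finset.card_pos.1 hpos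
      exact ⟨j, (Finset.mem_filter.1 hj).2⟩
    obtain ⟨j, rfl⟩ := hex
    exact (Fintype.mem_piFinset.1 hf) j
  have hbound : ∀ f ∈ Sg, |∏ i ∈ Finset.range n, I (cf f i)| ≤ M ^ q := by
    intro f hf
    obtain ⟨hfF, -⟩ := Finset.mem_filter.1 hf
    set s' := (Finset.range n).filter (fun i => cf f i ≠ 0) with hs'def
    have hps : ∏ i ∈ s', I (cf f i) = ∏ i ∈ Finset.range n, I (cf f i) :=
      Finset.prod_filter_of_ne fun i _ hne h0 => hne (by rw [h0, hI0])
    have hsumcf : ∑ i ∈ Finset.range n, cf f i = q := by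
      have := Finset.card_eq_sum_card_fiberwise
        (fun (j : Fin q) (_ : j ∈ (Finset.univ : Finset (Fin q))) =>
          (Fintype.mem_piFinset.1 hfF) j)
      simpa using this.symm
    have hcards' : s'.card ≤ q := by
      have h1 : s'.card ≤ ∑ i ∈ s', cf f i := by
        have := Finset.card_nsmul_le_sum s' (cf f) 1
          (fun i hi => by have := (Finset.mem_filter.1 hi).2; omega)
        simpa using this
      have h2 : ∑ i ∈ s', cf f i ≤ ∑ i ∈ Finset.range n, cf f i :=
        Finset.sum_le_sum_of_subset (Finset.filter_subset _ _)
      omega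
    calc |∏ i ∈ Finset.range n, I (cf f i)| = ∏ i ∈ s', |I (cf f i)| := by
          rw [← hps, Finset.abs_prod]
      _ ≤ ∏ _i ∈ s', M :=
          Finset.prod_le_prod (fun i _ => abs_nonneg _) (fun i _ => hIbound _ (hcfle f i))
      _ = M ^ s'.card := Finset.prod_const _
      _ ≤ M ^ q := pow_le_pow_right₀ hM1 hcards'
  have htotal : |∫ ω, (∑ i ∈ Finset.range n, Y i ω) ^ q ∂P|
      ≤ (n : ℝ) ^ hhalf * ((hhalf : ℝ) ^ q * M ^ q) := by
    rw [hswap, hvanish]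
    calc |∑ f ∈ Sg, ∏ i ∈ Finset.range n, I (cf f i)|
        ≤ ∑ f ∈ Sg, |∏ i ∈ Finset.range n, I (cf f i)| := Finset.abs_sum_le_sum_abs _ _
      _ ≤ ∑ _f ∈ Sg, M ^ q := Finset.sum_le_sum hbound
      _ = (Sg.card : ℝ) * M ^ q := by rw [Finset.sum_const, nsmul_eq_mul]
      _ ≤ ((n ^ hhalf * hhalf ^ q : ℕ) : ℝ) * M ^ q := by
          refine mul_le_mul_of_nonneg_right ?_ (by positivity)
          exact_mod_cast counting_aux q n hn
      _ = (n : ℝ) ^ hhalf * ((hhalf : ℝ) ^ q * M ^ q) := by push_cast; ring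
  have hL : ∫ ω, |(1/(n:ℝ)) * ∑ i ∈ Finset.range n, (X i ω - m)| ^ q ∂P
      = (1/(n:ℝ)) ^ q * ∫ ω, (∑ i ∈ Finset.range n, Y i ω) ^ q ∂P := by
    rw [← integral_const_mul]
    refine integral_congr_ae (Filter.Eventually.of_forall fun ω => ?_)
    show |1 / (n:ℝ) * ∑ i ∈ Finset.range n, (X i ω - m)| ^ q
        = (1 / (n:ℝ)) ^ q * (∑ i ∈ Finset.range n, Y i ω) ^ q
    rw [abs_mul, mul_pow, hq_even.pow_abs, hq_even.pow_abs]
  rw [hL]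
  have hIle : ∫ ω, (∑ i ∈ Finset.range n, Y i ω) ^ q ∂P
      ≤ (n : ℝ) ^ hhalf * ((hhalf : ℝ) ^ q * M ^ q) := (le_abs_self _).trans htotal
  have hfinal : (1/(n:ℝ)) ^ q * ∫ ω, (∑ i ∈ Finset.range n, Y i ω) ^ q ∂P
      ≤ (1/(n:ℝ)) ^ q * ((n : ℝ) ^ hhalf * ((hhalf : ℝ) ^ q * M ^ q)) :=
    mul_le_mul_of_nonneg_left hIle (by positivity)
  refine hfinal.trans_eq ?_
  have hrpow : (n : ℝ) ^ (-(q:ℝ)/2) = ((n : ℝ) ^ hhalf)⁻¹ := by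
    rw [show -(q:ℝ)/2 = -(hhalf:ℝ) by rw [← hq2]; push_cast; ring,
      Real.rpow_neg hn0.le, Real.rpow_natCast]
  have hpowsplit : (n : ℝ) ^ q = (n : ℝ) ^ hhalf * (n : ℝ) ^ hhalf := by
    rw [← pow_add]; congr 1; omega
  rw [hrpow, div_pow, one_pow, hpowsplit]
  have hnh : ((n : ℝ) ^ hhalf) ≠ 0 := by positivity
  field_simp
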